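/- Let j ∈ ℝ with 2j ∉ ℤ, let p ∈ ℕ, and set m := j−p. Then lim_{q→+∞, q real} q^{−(j+m)} · (q+i)^j · (q−i)^m · ∑_{k=0}^{p} ((−j)_k (m−j)_k / ((m+1)_k · k!)) · ((q−i)/(q+i))^k = Γ(2j+1)·Γ(m+1) / (Γ(j+m+1)·Γ(j+1)), where (q+i)^j, (q−i)^m are principal complex powers and q^{j+m} is the real power of the positive real q. -/

import Mathlib

/-- Ascending Pochhammer symbol `(a)_k = a (a+1) ⋯ (a+k-1)`. -/
noncomputable def pochC (a : ℂ) (k : ℕ) : ℂ := ∏ i ∈ Finset.range k, (a + i)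

lemma pochC_zero (a : ℂ) : pochC a 0 = 1 := by simp [pochC]

lemma pochC_succ (a : ℂ) (n : ℕ) : pochC a (n + 1) = pochC a n * (a + n) := by
  simp [pochC, Finset.prod_range_succ]

lemma pochC_succ_left (a : ℂ) (n : ℕ) : pochC a (n + 1) = a * pochC (a + 1) n := by
  rw [pochC, Finset.prod_range_succ', pochC]
  have h : ∀ i ∈ Finset.range n, (a + (((i + 1 : ℕ) : ℕ) : ℂ)) = (a + 1) + (i : ℂ) := by
    intro i _; push_cast; ring
  rw [Finset.prod_congr rfl h]
  push_cast
  ring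

lemma pochC_add (a : ℂ) (s : ℕ) : ∀ t : ℕ, pochC a (s + t) = pochC a s * pochC (a + s) t
  | 0 => by simp [pochC_zero]
  | t + 1 => by
    rw [← Nat.add_assoc, pochC_succ, pochC_add a s t, pochC_succ]
    push_cast
    ring

lemma pochC_ne_zero {a : ℂ} {k : ℕ} (h : ∀ i : ℕ, i < k → a + i ≠ 0) : pochC a k ≠ 0 := by
  rw [pochC]
  exact Finset.prod_ne_zero_iff.2 fun i hi => h i (Finset.mem_range.1 hi)

lemma pochC_neg_nat (p : ℕ) {k : ℕ} (hk : k ≤ p) :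
    pochC (-(p : ℂ)) k = (-1 : ℂ) ^ k * (k.factorial : ℂ) * (p.choose k : ℂ) := by
  have h1 : ∀ i ∈ Finset.range k, (-(p : ℂ) + i) = (-1 : ℂ) * ((p - i : ℕ) : ℂ) := by
    intro i hi
    have hip : i ≤ p := le_trans (Finset.mem_range.1 hi).le hk
    push_cast [Nat.cast_sub hip]
    ring
  rw [pochC, Finset.prod_congr rfl h1, Finset.prod_mul_distrib, Finset.prod_const,
    Finset.card_range, ← Nat.cast_prod, ← Nat.descFactorial_eq_prod_range,
    Nat.descFactorial_eq_factorial_mul_choose]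
  push_cast
  ring

open Finset in
lemma vand : ∀ (p : ℕ) (b c : ℂ),
    ∑ k ∈ range (p + 1), (-1 : ℂ) ^ k * (p.choose k : ℂ) * pochC b k * pochC (c + k) (p - k)
      = pochC (c - b) p := by
  intro p
  induction p with
  | zero => intro b c; simp [pochC]
  | succ p ih =>
    intro b c
    rw [Finset.sum_range_succ']
    have hterm : ∀ k ∈ range (p + 1),
        (-1 : ℂ) ^ (k + 1) * (((p + 1).choose (k + 1)) : ℂ) * pochC b (k + 1) *
            pochC (c + ((k + 1 : ℕ) : ℂ)) (p + 1 - (k + 1))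
          = (-1 : ℂ) ^ (k + 1) * ((p.choose (k + 1)) : ℂ) * pochC b (k + 1) *
              pochC (c + ((k + 1 : ℕ) : ℂ)) (p - k) +
            (-b) * ((-1 : ℂ) ^ k * ((p.choose k) : ℂ) * pochC (b + 1) k *
              pochC ((c + 1) + (k : ℂ)) (p - k)) := by
      intro k hk
      have hps : p + 1 - (k + 1) = p - k := by omega
      rw [hps, Nat.choose_succ_succ, pochC_succ_left]
      have hc : c + ((k + 1 : ℕ) : ℂ) = (c + 1) + (k : ℂ) := by push_cast; ring
      rw [hc]
      push_cast
      ring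
    rw [Finset.sum_congr rfl hterm, Finset.sum_add_distrib, ← Finset.mul_sum, ih (b + 1) (c + 1)]
    have hcb : (c + 1) - (b + 1) = c - b := by ring
    rw [hcb]
    have key : ∑ k ∈ range (p + 2), (-1 : ℂ) ^ k * ((p.choose k) : ℂ) * pochC b k *
          pochC (c + (k : ℂ)) (p + 1 - k)
        = (c + p) * pochC (c - b) p := by
      rw [Finset.sum_range_succ]
      have hz : ((p.choose (p + 1)) : ℂ) = 0 := by
        rw [Nat.choose_eq_zero_of_lt (by omega)]; simp
      rw [hz]
      have hterm2 : ∀ k ∈ range (p + 1),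
          (-1 : ℂ) ^ k * ((p.choose k) : ℂ) * pochC b k * pochC (c + (k : ℂ)) (p + 1 - k)
            = (c + p) * ((-1 : ℂ) ^ k * ((p.choose k) : ℂ) * pochC b k *
                pochC (c + (k : ℂ)) (p - k)) := by
        intro k hk
        have hk' : k ≤ p := by simpa [Nat.lt_succ_iff] using hk
        have h1 : p + 1 - k = (p - k) + 1 := by omega
        rw [h1, pochC_succ]
        have h2 : (c + (k : ℂ)) + (((p - k : ℕ)) : ℂ) = c + p := by
          rw [Nat.cast_sub hk']; ring
        rw [h2]
        ring
      rw [Finset.sum_congr rfl hterm2, ← Finset.mul_sum, ih b c]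
      ring
    have key' : ∑ k ∈ range (p + 2), (-1 : ℂ) ^ k * ((p.choose k) : ℂ) * pochC b k *
          pochC (c + (k : ℂ)) (p + 1 - k)
        = (∑ k ∈ range (p + 1), (-1 : ℂ) ^ (k + 1) * ((p.choose (k + 1)) : ℂ) *
            pochC b (k + 1) * pochC (c + ((k + 1 : ℕ) : ℂ)) (p - k)) + pochC c (p + 1) := by
      rw [Finset.sum_range_succ']
      congr 1
      · apply Finset.sum_congr rfl
        intro k hk
        rw [show p + 1 - (k + 1) = p - k from by omega]
      · simp [pochC_zero]
    have f0eq : (-1 : ℂ) ^ 0 * (((p + 1).choose 0) : ℂ) * pochC b 0 *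
        pochC (c + ((0 : ℕ) : ℂ)) (p + 1 - 0) = pochC c (p + 1) := by
      simp [pochC_zero]
    rw [pochC_succ]
    linear_combination key - key' + f0eq

lemma Gamma_shift (z : ℂ) : ∀ n : ℕ, (∀ k : ℕ, k < n → z + k ≠ 0) →
    Complex.Gamma (z + n) = pochC z n * Complex.Gamma z
  | 0, _ => by simp [pochC_zero]
  | n + 1, h => by
    have h1 : z + ((n + 1 : ℕ) : ℂ) = (z + n) + 1 := by push_cast; ring
    rw [h1, Complex.Gamma_add_one _ (h n (by omega)),
      Gamma_shift z n (fun k hk => h k (by omega)), pochC_succ]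
    ring

open Finset in
lemma sum_id (j : ℝ) (hj : ∀ m : ℤ, 2 * j ≠ (m : ℝ)) (p : ℕ) :
    ∑ k ∈ Finset.range (p + 1),
        pochC (-(j : ℂ)) k * pochC (((j : ℂ) - p) - j) k /
          (pochC (((j : ℂ) - p) + 1) k * (Nat.factorial k : ℂ))
      = pochC ((j : ℂ) - (p : ℂ) + 1 + (j : ℂ)) p / pochC (((j : ℂ) - p) + 1) p := by
  have hjZ : ∀ n : ℤ, (j : ℝ) ≠ (n : ℝ) := by
    intro n hn
    exact hj (2 * n) (by push_cast [hn]; ring)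
  set c : ℂ := ((j : ℂ) - p) + 1 with hc
  have hcne : ∀ i : ℕ, c + i ≠ 0 := by
    intro i h
    rw [hc] at h
    have h2 : ((j - p + 1 + i : ℝ) : ℂ) = 0 := by push_cast; linear_combination h
    rw [Complex.ofReal_eq_zero] at h2
    exact hjZ ((p : ℤ) - 1 - (i : ℤ)) (by push_cast; linarith)
  have hpk : ∀ k : ℕ, pochC c k ≠ 0 := fun k => pochC_ne_zero fun i _ => hcne i
  have hterm : ∀ k ∈ range (p + 1),
      pochC (-(j : ℂ)) k * pochC (((j : ℂ) - p) - j) k /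
          (pochC (((j : ℂ) - p) + 1) k * (Nat.factorial k : ℂ))
        = (-1 : ℂ) ^ k * (p.choose k : ℂ) * pochC (-(j : ℂ)) k * pochC (c + k) (p - k) /
            pochC c p := by
    intro k hk
    have hk' : k ≤ p := by simpa [Nat.lt_succ_iff] using hk
    have hmj : ((j : ℂ) - p) - j = -(p : ℂ) := by ring
    rw [hmj, pochC_neg_nat p hk', ← hc]
    have hsplit : pochC c p = pochC c k * pochC (c + k) (p - k) := by
      rw [← pochC_add c k (p - k), Nat.add_sub_cancel' hk']
    rw [hsplit]
    have hfac : (Nat.factorial k : ℂ) ≠ 0 := by exact_mod_cast Nat.factorial_ne_zero k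
    have hne2 : pochC (c + k) (p - k) ≠ 0 := by
      apply pochC_ne_zero
      intro i _
      have hx : (c + (k : ℂ)) + i = c + ((k + i : ℕ) : ℂ) := by push_cast; ring
      rw [hx]; exact hcne _
    rw [div_eq_div_iff (mul_ne_zero (hpk k) hfac) (mul_ne_zero (hpk k) hne2)]
    ring
  rw [Finset.sum_congr rfl hterm, ← Finset.sum_div, vand p (-(j : ℂ)) c]
  congr 2
  rw [hc]; ring

lemma gamma_id (j : ℝ) (hj : ∀ m : ℤ, 2 * j ≠ (m : ℝ)) (p : ℕ) :
    Complex.Gamma (2 * (j : ℂ) + 1) * Complex.Gamma (((j : ℂ) - p) + 1) /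
        (Complex.Gamma ((j : ℂ) + ((j : ℂ) - p) + 1) * Complex.Gamma ((j : ℂ) + 1))
      = pochC ((j : ℂ) - (p : ℂ) + 1 + (j : ℂ)) p / pochC (((j : ℂ) - p) + 1) p := by
  have hjZ : ∀ n : ℤ, (j : ℝ) ≠ (n : ℝ) := by
    intro n hn
    exact hj (2 * n) (by push_cast [hn]; ring)
  set z : ℂ := (j : ℂ) + ((j : ℂ) - p) + 1 with hz
  set z' : ℂ := ((j : ℂ) - p) + 1 with hz'
  have hzk : ∀ k : ℕ, z + k ≠ 0 := by
    intro k h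
    rw [hz] at h
    have h2 : ((2 * j + 1 - p + k : ℝ) : ℂ) = 0 := by push_cast; linear_combination h
    rw [Complex.ofReal_eq_zero] at h2
    exact hj ((p : ℤ) - 1 - (k : ℤ)) (by push_cast; linarith)
  have hzk' : ∀ k : ℕ, z' + k ≠ 0 := by
    intro k h
    rw [hz'] at h
    have h2 : ((j - p + 1 + k : ℝ) : ℂ) = 0 := by push_cast; linear_combination h
    rw [Complex.ofReal_eq_zero] at h2
    exact hjZ ((p : ℤ) - 1 - (k : ℤ)) (by push_cast; linarith)
  have h1 : Complex.Gamma (2 * (j : ℂ) + 1) = pochC z p * Complex.Gamma z := by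
    have e : 2 * (j : ℂ) + 1 = z + p := by rw [hz]; ring
    rw [e]; exact Gamma_shift z p fun k _ => hzk k
  have h2 : Complex.Gamma ((j : ℂ) + 1) = pochC z' p * Complex.Gamma z' := by
    have e : (j : ℂ) + 1 = z' + p := by rw [hz']; ring
    rw [e]; exact Gamma_shift z' p fun k _ => hzk' k
  have hGz : Complex.Gamma z ≠ 0 := Complex.Gamma_ne_zero fun n h => hzk n (by rw [h]; ring)
  have hGz' : Complex.Gamma z' ≠ 0 := Complex.Gamma_ne_zero fun n h => hzk' n (by rw [h]; ring)
  have hpz' : pochC z' p ≠ 0 := pochC_ne_zero fun i _ => hzk' i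
  have hznum : (j : ℂ) - (p : ℂ) + 1 + (j : ℂ) = z := by rw [hz]; ring
  rw [h1, h2, hznum]
  field_simp

lemma cpow_ofReal_mul (q : ℝ) (hq : 0 < q) (w : ℂ) (hw : w ≠ 0) (s : ℂ) :
    ((q : ℂ) * w) ^ s = (q : ℂ) ^ s * w ^ s := by
  have hq0 : (q : ℂ) ≠ 0 := Complex.ofReal_ne_zero.mpr hq.ne'
  rw [Complex.cpow_def_of_ne_zero (mul_ne_zero hq0 hw), Complex.log_ofReal_mul hq hw,
    add_mul, Complex.exp_add, Complex.cpow_def_of_ne_zero hq0, Complex.cpow_def_of_ne_zero hw,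
    Complex.ofReal_log hq.le]

open Filter Complex in
/-- Large-`q` asymptotics of the analytically continued closed-form left Wilson matrix
element; here `m = j - p`. -/
theorem stmt_8 (j : ℝ) (hj : ∀ m : ℤ, 2 * j ≠ (m : ℝ)) (p : ℕ) :
    Filter.Tendsto
      (fun q : ℝ =>
        ((q ^ (-(j + (j - p))) : ℝ) : ℂ) *
          ((q : ℂ) + Complex.I) ^ (j : ℂ) *
          ((q : ℂ) - Complex.I) ^ ((j : ℂ) - p) *
          ∑ k ∈ Finset.range (p + 1),
            pochC (-(j : ℂ)) k * pochC (((j : ℂ) - p) - j) k /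
                (pochC (((j : ℂ) - p) + 1) k * (Nat.factorial k : ℂ)) *
              (((q : ℂ) - Complex.I) / ((q : ℂ) + Complex.I)) ^ k)
      Filter.atTop
      (nhds (Complex.Gamma (2 * (j : ℂ) + 1) * Complex.Gamma (((j : ℂ) - p) + 1) /
        (Complex.Gamma ((j : ℂ) + ((j : ℂ) - p) + 1) * Complex.Gamma ((j : ℂ) + 1)))) := by
  have hval : Complex.Gamma (2 * (j : ℂ) + 1) * Complex.Gamma (((j : ℂ) - p) + 1) /
        (Complex.Gamma ((j : ℂ) + ((j : ℂ) - p) + 1) * Complex.Gamma ((j : ℂ) + 1))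
      = ∑ k ∈ Finset.range (p + 1),
          pochC (-(j : ℂ)) k * pochC (((j : ℂ) - p) - j) k /
            (pochC (((j : ℂ) - p) + 1) k * (Nat.factorial k : ℂ)) :=
    (gamma_id j hj p).trans (sum_id j hj p).symm
  rw [hval]
  -- limits of the auxiliary functions
  have hinv : Tendsto (fun q : ℝ => ((q⁻¹ : ℝ) : ℂ)) atTop (nhds 0) := by
    have h1 : Tendsto (fun q : ℝ => q⁻¹) atTop (nhds (0 : ℝ)) := tendsto_inv_atTop_zero
    have := (Complex.continuous_ofReal.tendsto 0).comp h1
    simpa [Function.comp_def] using this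
  have hw1 : Tendsto (fun q : ℝ => 1 + Complex.I * ((q⁻¹ : ℝ) : ℂ)) atTop (nhds 1) := by
    have := (tendsto_const_nhds (x := (1 : ℂ))).add (hinv.const_mul Complex.I)
    simpa using this
  have hw2 : Tendsto (fun q : ℝ => 1 - Complex.I * ((q⁻¹ : ℝ) : ℂ)) atTop (nhds 1) := by
    have := (tendsto_const_nhds (x := (1 : ℂ))).sub (hinv.const_mul Complex.I)
    simpa using this
  have hone : (1 : ℂ) ∈ Complex.slitPlane := by
    simp [Complex.mem_slitPlane_iff]
  have hcp1 : Tendsto (fun q : ℝ => (1 + Complex.I * ((q⁻¹ : ℝ) : ℂ)) ^ (j : ℂ)) atTop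
      (nhds 1) := by
    have hc : ContinuousAt (fun z : ℂ => z ^ (j : ℂ)) 1 := continuousAt_cpow_const hone
    have := hc.tendsto.comp hw1
    simpa [Function.comp_def, Complex.one_cpow] using this
  have hcp2 : Tendsto (fun q : ℝ => (1 - Complex.I * ((q⁻¹ : ℝ) : ℂ)) ^ ((j : ℂ) - p)) atTop
      (nhds 1) := by
    have hc : ContinuousAt (fun z : ℂ => z ^ ((j : ℂ) - (p : ℂ))) 1 :=
      continuousAt_cpow_const hone
    have := hc.tendsto.comp hw2
    simpa [Function.comp_def, Complex.one_cpow] using this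
  have hr : Tendsto (fun q : ℝ => (1 - Complex.I * ((q⁻¹ : ℝ) : ℂ)) /
      (1 + Complex.I * ((q⁻¹ : ℝ) : ℂ))) atTop (nhds 1) := by
    have := hw2.div hw1 one_ne_zero
    rw [div_one] at this; exact this
  have hS : Tendsto (fun q : ℝ => ∑ k ∈ Finset.range (p + 1),
      pochC (-(j : ℂ)) k * pochC (((j : ℂ) - p) - j) k /
          (pochC (((j : ℂ) - p) + 1) k * (Nat.factorial k : ℂ)) *
        ((1 - Complex.I * ((q⁻¹ : ℝ) : ℂ)) / (1 + Complex.I * ((q⁻¹ : ℝ) : ℂ))) ^ k) atTop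
      (nhds (∑ k ∈ Finset.range (p + 1),
        pochC (-(j : ℂ)) k * pochC (((j : ℂ) - p) - j) k /
          (pochC (((j : ℂ) - p) + 1) k * (Nat.factorial k : ℂ)))) := by
    have := tendsto_finset_sum (Finset.range (p + 1))
      (fun k (_ : k ∈ Finset.range (p + 1)) =>
        (hr.pow k).const_mul (pochC (-(j : ℂ)) k * pochC (((j : ℂ) - p) - j) k /
          (pochC (((j : ℂ) - p) + 1) k * (Nat.factorial k : ℂ))))
    simpa using this
  have hg : Tendsto (fun q : ℝ =>
      (1 + Complex.I * ((q⁻¹ : ℝ) : ℂ)) ^ (j : ℂ) *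
        (1 - Complex.I * ((q⁻¹ : ℝ) : ℂ)) ^ ((j : ℂ) - p) *
        ∑ k ∈ Finset.range (p + 1),
          pochC (-(j : ℂ)) k * pochC (((j : ℂ) - p) - j) k /
              (pochC (((j : ℂ) - p) + 1) k * (Nat.factorial k : ℂ)) *
            ((1 - Complex.I * ((q⁻¹ : ℝ) : ℂ)) / (1 + Complex.I * ((q⁻¹ : ℝ) : ℂ))) ^ k) atTop
      (nhds (∑ k ∈ Finset.range (p + 1),
        pochC (-(j : ℂ)) k * pochC (((j : ℂ) - p) - j) k /
          (pochC (((j : ℂ) - p) + 1) k * (Nat.factorial k : ℂ)))) := by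
    have := (hcp1.mul hcp2).mul hS
    simpa using this
  apply hg.congr'
  filter_upwards [eventually_gt_atTop (0 : ℝ)] with q hq
  -- pointwise equality for q > 0
  have hq0 : (q : ℂ) ≠ 0 := Complex.ofReal_ne_zero.mpr hq.ne'
  have hw1ne : (1 + Complex.I * ((q⁻¹ : ℝ) : ℂ)) ≠ 0 := by
    intro h
    have := congrArg Complex.re h
    simp at this
  have hw2ne : (1 - Complex.I * ((q⁻¹ : ℝ) : ℂ)) ≠ 0 := by
    intro h
    have := congrArg Complex.re h
    simp at this
  have hfac1 : (q : ℂ) + Complex.I = (q : ℂ) * (1 + Complex.I * ((q⁻¹ : ℝ) : ℂ)) := by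
    push_cast
    field_simp
  have hfac2 : (q : ℂ) - Complex.I = (q : ℂ) * (1 - Complex.I * ((q⁻¹ : ℝ) : ℂ)) := by
    push_cast
    field_simp
  have hrat : ((q : ℂ) - Complex.I) / ((q : ℂ) + Complex.I)
      = (1 - Complex.I * ((q⁻¹ : ℝ) : ℂ)) / (1 + Complex.I * ((q⁻¹ : ℝ) : ℂ)) := by
    rw [hfac1, hfac2, mul_div_mul_left _ _ hq0]
  have e1 : ((q : ℂ) + Complex.I) ^ (j : ℂ)
      = (q : ℂ) ^ (j : ℂ) * (1 + Complex.I * ((q⁻¹ : ℝ) : ℂ)) ^ (j : ℂ) := by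
    rw [hfac1, cpow_ofReal_mul q hq _ hw1ne]
  have e2 : ((q : ℂ) - Complex.I) ^ ((j : ℂ) - p)
      = (q : ℂ) ^ ((j : ℂ) - p) * (1 - Complex.I * ((q⁻¹ : ℝ) : ℂ)) ^ ((j : ℂ) - p) := by
    rw [hfac2, cpow_ofReal_mul q hq _ hw2ne]
  have hcoll : ((q ^ (-(j + (j - p))) : ℝ) : ℂ) * ((q : ℂ) ^ (j : ℂ) * (q : ℂ) ^ ((j : ℂ) - p))
      = 1 := by
    have hexp2 : (j : ℂ) - (p : ℂ) = ((j - (p : ℝ) : ℝ) : ℂ) := by push_cast; ring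
    rw [hexp2, ← Complex.ofReal_cpow hq.le, ← Complex.ofReal_cpow hq.le,
      ← Complex.ofReal_mul, ← Complex.ofReal_mul, ← Complex.ofReal_one]
    congr 1
    rw [← Real.rpow_add hq, ← Real.rpow_add hq,
      show -(j + (j - (p : ℝ))) + (j + (j - (p : ℝ))) = 0 by ring, Real.rpow_zero]
  simp only [hrat, e1, e2]
  set S : ℂ := ∑ k ∈ Finset.range (p + 1),
    pochC (-(j : ℂ)) k * pochC (((j : ℂ) - p) - j) k /
        (pochC (((j : ℂ) - p) + 1) k * (Nat.factorial k : ℂ)) *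
      ((1 - Complex.I * ((q⁻¹ : ℝ) : ℂ)) / (1 + Complex.I * ((q⁻¹ : ℝ) : ℂ))) ^ k with hsS
  linear_combination
    -((1 + Complex.I * ((q⁻¹ : ℝ) : ℂ)) ^ (j : ℂ) *
      (1 - Complex.I * ((q⁻¹ : ℝ) : ℂ)) ^ ((j : ℂ) - p) * S) * hcoll
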